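/- If G is a minimally 2-connected simple graph, then the minimum degree of G is two, and the subgraph of G induced by the vertices of degree at least 3 is a forest (has no cycles). -/

import Mathlib

/-- A strong edge coloring: any two distinct edges that are adjacent or both
adjacent to a common third edge receive distinct colors. -/
def SimpleGraph.IsStrongEdgeColoring {V : Type*} (G : SimpleGraph V)
    (C : Sym2 V → ℕ) : Prop :=
  ∀ e ∈ G.edgeSet, ∀ f ∈ G.edgeSet, e ≠ f →
    ((∃ v, v ∈ e ∧ v ∈ f) ∨
      ∃ g ∈ G.edgeSet, (∃ v, v ∈ e ∧ v ∈ g) ∧ ∃ w, w ∈ g ∧ w ∈ f) →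
    C e ≠ C f

/-- The strong chromatic index: the least number of colors in a strong edge
coloring of `G`. -/
noncomputable def SimpleGraph.strongChromaticIndex {V : Type*}
    (G : SimpleGraph V) : ℕ :=
  sInf {n | ∃ C : Sym2 V → ℕ, (∀ e ∈ G.edgeSet, C e < n) ∧
    G.IsStrongEdgeColoring C}

/-- A graph is `k`-degenerate if every (induced) subgraph on a nonempty vertex
set has a vertex of degree at most `k` in that subgraph. -/
def SimpleGraph.Degenerate {V : Type*} [Fintype V] (G : SimpleGraph V)
    [DecidableRel G.Adj] (k : ℕ) : Prop :=
  ∀ S : Finset V, S.Nonempty → ∃ v ∈ S, (S.filter (G.Adj v)).card ≤ k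

/-- A graph is 2-connected if it has at least 3 vertices and deleting any
single vertex leaves a connected graph. -/
def SimpleGraph.TwoConnected {V : Type*} [Fintype V] (G : SimpleGraph V) : Prop :=
  3 ≤ Fintype.card V ∧ ∀ v : V, (G.induce {u | u ≠ v}).Connected

/-- A graph is minimally 2-connected if it is 2-connected but deleting any
edge destroys 2-connectedness. -/
def SimpleGraph.MinimallyTwoConnected {V : Type*} [Fintype V]
    (G : SimpleGraph V) : Prop :=
  G.TwoConnected ∧ ∀ e ∈ G.edgeSet, ¬ (G.deleteEdges {e}).TwoConnected


namespace TwoConnAux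

open SimpleGraph Walk

variable {V : Type*}

/-- Graph `G` with vertex `u` isolated. -/
def Dv (G : SimpleGraph V) (u : V) : SimpleGraph V where
  Adj a b := G.Adj a b ∧ a ≠ u ∧ b ≠ u
  symm := ⟨fun a b h => ⟨h.1.symm, h.2.2, h.2.1⟩⟩
  loopless := ⟨fun a h => G.loopless.irrefl a h.1⟩

/-- Graph `G` with vertex `u` isolated and edge `e` deleted. -/
def Dd (G : SimpleGraph V) (u : V) (e : Sym2 V) : SimpleGraph V :=
  (Dv G u).deleteEdges {e}

lemma Dd_adj {G : SimpleGraph V} {u a b : V} {e : Sym2 V} :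
    (Dd G u e).Adj a b ↔ (G.Adj a b ∧ a ≠ u ∧ b ≠ u) ∧ s(a, b) ≠ e := by
  rw [Dd, deleteEdges_adj, Set.mem_singleton_iff]
  exact Iff.rfl

lemma Dd_le {G : SimpleGraph V} {u : V} {e : Sym2 V} {a b : V}
    (h : (Dd G u e).Adj a b) : G.Adj a b := (Dd_adj.mp h).1.1

lemma reach_eq_of_isolated {H : SimpleGraph V} {u : V} (hu : ∀ b, ¬ H.Adj b u) :
    ∀ {a : V}, H.Reachable a u → a = u := by
  intro a h
  obtain ⟨w⟩ := h
  induction w with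
  | nil => rfl
  | cons h p ih =>
    rw [ih hu] at h
    exact absurd h (hu _)

lemma Dd_isolated (G : SimpleGraph V) (u : V) (e : Sym2 V) :
    ∀ b, ¬ (Dd G u e).Adj b u := fun _ h => (Dd_adj.mp h).1.2.2 rfl

lemma Dd_reach_ne {G : SimpleGraph V} {u a : V} {e : Sym2 V}
    (h : (Dd G u e).Reachable a u) : a = u :=
  reach_eq_of_isolated (Dd_isolated G u e) h

lemma Dv_isolated (G : SimpleGraph V) (u : V) :
    ∀ b, ¬ (Dv G u).Adj b u := fun _ h => h.2.2 rfl

/-- A walk in `G` avoiding vertex `u` and edge `e` gives reachability in `Dd G u e`. -/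
lemma walk_reach_Dd {G : SimpleGraph V} {u : V} {e : Sym2 V} :
    ∀ {a b : V} (w : G.Walk a b), u ∉ w.support → e ∉ w.edges →
      (Dd G u e).Reachable a b := by
  intro a b w
  induction w with
  | nil => exact fun _ _ => Reachable.refl _
  | @cons a c b h p ih =>
    intro hu he
    rw [support_cons, List.mem_cons] at hu
    push_neg at hu
    rw [edges_cons, List.mem_cons] at he
    push_neg at he
    have hc : c ≠ u := fun hh => hu.2 (hh ▸ p.start_mem_support)
    have hadj : (Dd G u e).Adj a c :=
      Dd_adj.mpr ⟨⟨h, fun hh => hu.1 hh.symm, hc⟩, fun hh => he.1 hh.symm⟩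
    exact hadj.reachable.trans (ih hu.2 he.2)

/-- Splitting a trail at a vertex: `p` reaches one of the endpoints avoiding `u` and `e`. -/
lemma split [DecidableEq V] {G : SimpleGraph V} {u p x y : V} (e : Sym2 V) (R : G.Walk x y)
    (ht : R.IsTrail) (hu : u ∉ R.support) (hp : p ∈ R.support) :
    (Dd G u e).Reachable p x ∨ (Dd G u e).Reachable p y := by
  have hspec := R.take_spec hp
  have hnodup : R.edges.Nodup := ht.edges_nodup
  rw [← hspec, edges_append] at hnodup
  by_cases he : e ∈ (R.takeUntil p hp).edges
  · right
    refine walk_reach_Dd (R.dropUntil p hp)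
      (fun h => hu (R.support_dropUntil_subset hp h)) ?_
    exact fun hmem => (List.nodup_append'.mp hnodup).2.2 he hmem
  · left
    refine walk_reach_Dd (R.takeUntil p hp).reverse ?_ ?_
    · rw [support_reverse, List.mem_reverse]
      exact fun h => hu (R.support_takeUntil_subset hp h)
    · rw [edges_reverse, List.mem_reverse]
      exact he

lemma reach_Dv_of_twoConnected [Fintype V] {G : SimpleGraph V} (h : G.TwoConnected)
    {v a b : V} (ha : a ≠ v) (hb : b ≠ v) : (Dv G v).Reachable a b := by
  have hr := (h.2 v).preconnected ⟨a, ha⟩ ⟨b, hb⟩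
  let f : G.induce {u | u ≠ v} →g Dv G v :=
    { toFun := Subtype.val, map_rel' := fun {x y} hxy => ⟨hxy, x.2, y.2⟩ }
  exact hr.map f

lemma reach_induce_of_Dd {G : SimpleGraph V} {u : V} {e : Sym2 V} :
    ∀ {a b : V} (w : (Dd G u e).Walk a b) (ha : a ≠ u) (hb : b ≠ u),
      ((G.deleteEdges {e}).induce {x | x ≠ u}).Reachable ⟨a, ha⟩ ⟨b, hb⟩ := by
  intro a b w
  induction w with
  | nil => exact fun _ _ => Reachable.refl _
  | @cons a c b h p ih =>
    intro ha hb
    have h' := Dd_adj.mp h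
    have hc : c ≠ u := h'.1.2.2
    have hadj : ((G.deleteEdges {e}).induce {x | x ≠ u}).Adj ⟨a, ha⟩ ⟨c, hc⟩ := by
      show (G.deleteEdges {e}).Adj a c
      rw [deleteEdges_adj, Set.mem_singleton_iff]
      exact ⟨h'.1.1, h'.2⟩
    exact hadj.reachable.trans (ih hc hb)

/-- If the deleted edge's endpoints are reachable, reachability in `Dv` transfers to `Dd`. -/
lemma patch {G : SimpleGraph V} {u : V} {e : Sym2 V} {c d : V}
    (hcd : e = s(c, d)) (hR : (Dd G u e).Reachable c d) :
    ∀ {a b : V}, (Dv G u).Walk a b → (Dd G u e).Reachable a b := by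
  intro a b w
  induction w with
  | nil => exact Reachable.refl _
  | @cons a x b h p ih =>
    refine Reachable.trans ?_ ih
    by_cases hse : s(a, x) = e
    · rw [hcd] at hse
      rcases Sym2.eq_iff.mp hse with ⟨rfl, rfl⟩ | ⟨rfl, rfl⟩
      · exact hR
      · exact hR.symm
    · exact (Dd_adj.mpr ⟨⟨h.1, h.2.1, h.2.2⟩, hse⟩).reachable


lemma cyc_decomp {G : SimpleGraph V} {u : V} (W : G.Walk u u) (hW : W.IsCycle) :
    ∃ (x y : V) (hx : G.Adj u x) (hy : G.Adj y u) (R : G.Walk x y),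
      W = Walk.cons hx (R.concat hy) := by
  cases W with
  | nil => exact absurd rfl hW.ne_nil
  | @cons _ x _ hx W₁ =>
    obtain ⟨y, hadj, T, hrev⟩ := Walk.exists_eq_cons_of_ne hx.ne W₁.reverse
    have h1 : W₁ = T.reverse.concat hadj.symm := by
      rw [← reverse_reverse W₁, hrev, reverse_cons, concat_eq_append]
    exact ⟨x, y, hx, hadj.symm, T.reverse, by rw [h1]⟩

lemma mem_support_iff_mem_tail {G : SimpleGraph V} {w : V} (d : G.Walk w w)
    (hd : ¬d.Nil) {z : V} : z ∈ d.support ↔ z ∈ d.support.tail := by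
  constructor
  · intro hz
    rw [support_eq_cons] at hz
    rcases List.mem_cons.mp hz with rfl | h2
    · cases d with
      | nil => exact absurd Walk.Nil.nil hd
      | cons h p =>
        rw [support_cons, List.tail_cons]
        exact p.end_mem_support
    · exact h2
  · intro h2
    rw [support_eq_cons]
    exact List.mem_cons_of_mem _ h2

lemma support_rotate_mem [DecidableEq V] {G : SimpleGraph V} {v u : V} (c : G.Walk v v)
    (hc : c.IsCycle) (h : u ∈ c.support) {z : V} :
    z ∈ (c.rotate u h).support ↔ z ∈ c.support := by
  have hper := support_rotate c u h
  rw [mem_support_iff_mem_tail _ (hc.rotate h).not_nil,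
    mem_support_iff_mem_tail _ hc.not_nil]
  exact hper.mem_iff

lemma cycle_reach [DecidableEq V] {G : SimpleGraph V} {v₀ : V} (C : G.Walk v₀ v₀)
    (hC : C.IsCycle) {a b w : V} (hab : s(a, b) ∈ C.edges) (hw : w ∉ C.support) :
    (Dd G w s(a, b)).Reachable a b := by
  have haC : a ∈ C.support := C.fst_mem_support_of_mem_edges hab
  have hC₁ : (C.rotate a haC).IsCycle := hC.rotate haC
  obtain ⟨x, y, hx, hy, R, hdec⟩ := cyc_decomp (C.rotate a haC) hC₁
  have hsup : (C.rotate a haC).support = a :: (R.support ++ [a]) := by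
    rw [hdec, support_cons, support_concat]
  have hedg : (C.rotate a haC).edges = s(a, x) :: (R.edges ++ [s(y, a)]) := by
    rw [hdec, edges_cons, edges_concat, List.concat_eq_append]
  have hnd : (R.support ++ [a]).Nodup := by
    have h2 := hC₁.support_nodup
    rw [hsup, List.tail_cons] at h2
    exact h2
  have haR : a ∉ R.support := by
    intro hmem
    exact (List.nodup_append'.mp hnd).2.2 hmem (List.mem_singleton_self a)
  have hRnil : ¬ R.Nil := by
    have h3 := hC₁.three_le_length
    rw [hdec] at h3
    rw [nil_iff_length_eq]
    simp only [length_cons, length_concat] at h3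
    omega
  have hxy : x ≠ y := by
    rintro rfl
    have hx1 : x ∈ R.support.tail :=
      (mem_support_iff_mem_tail R hRnil).mp R.start_mem_support
    have hnds : R.support.Nodup := (List.nodup_append'.mp hnd).1
    rw [support_eq_cons] at hnds
    exact (List.nodup_cons.mp hnds).1 hx1
  have hwC₁ : w ∉ (C.rotate a haC).support := fun hmem =>
    hw ((support_rotate_mem C hC haC).mp hmem)
  rw [hsup] at hwC₁
  simp only [List.mem_cons, List.mem_append, List.mem_singleton] at hwC₁
  push_neg at hwC₁
  obtain ⟨hwa, hwR, -⟩ := hwC₁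
  have hab₁ : s(a, b) ∈ (C.rotate a haC).edges :=
    (List.IsRotated.mem_iff (rotate_edges C a haC)).mpr hab
  rw [hedg] at hab₁
  rcases List.mem_cons.mp hab₁ with heq | hmem
  · have hbx : b = x := by
      rcases Sym2.eq_iff.mp heq with ⟨-, h⟩ | ⟨h1, -⟩
      · exact h
      · exact absurd h1 hx.ne
    subst hbx
    have hre : s(a, b) ∉ (R.concat hy).edges := by
      rw [edges_concat, List.concat_eq_append, List.mem_append, List.mem_singleton]
      rintro (hmem2 | heq2)
      · exact haR (R.fst_mem_support_of_mem_edges hmem2)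
      · rcases Sym2.eq_iff.mp heq2 with ⟨h1, -⟩ | ⟨-, h2⟩
        · rw [h1] at haR
          exact absurd R.end_mem_support haR
        · exact hxy h2
    have hws : w ∉ (R.concat hy).support := by
      rw [support_concat, List.mem_append, List.mem_singleton]
      rintro (hmem2 | rfl)
      · exact hwR hmem2
      · exact hwa rfl
    exact (walk_reach_Dd (R.concat hy) hws hre).symm
  rcases List.mem_append.mp hmem with hmemR | hlast
  · exact absurd (R.fst_mem_support_of_mem_edges hmemR) haR
  · have hlast' : s(a, b) = s(y, a) := List.mem_singleton.mp hlast
    have hby : b = y := by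
      rcases Sym2.eq_iff.mp hlast' with ⟨h1, -⟩ | ⟨-, h2⟩
      · rw [h1] at haR
        exact absurd R.end_mem_support haR
      · exact h2
    subst hby
    have hre : s(a, b) ∉ (Walk.cons hx R).edges := by
      rw [edges_cons, List.mem_cons]
      rintro (heq2 | hmem2)
      · rcases Sym2.eq_iff.mp heq2 with ⟨-, h2⟩ | ⟨h1, -⟩
        · exact hxy h2.symm
        · rw [h1] at haR
          exact absurd R.start_mem_support haR
      · exact haR (R.fst_mem_support_of_mem_edges hmem2)
    have hws : w ∉ (Walk.cons hx R).support := by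
      rw [support_cons, List.mem_cons]
      rintro (rfl | hmem2)
      · exact hwa rfl
      · exact hwR hmem2
    exact walk_reach_Dd (Walk.cons hx R) hws hre


lemma reach_transfer {G : SimpleGraph V} {u μ : V} {e f : Sym2 V} {a : V}
    (hz : ∀ z, (Dd G u e).Reachable a z → z ≠ μ)
    (hf : ∀ w c, (Dd G u e).Adj w c → s(w, c) ≠ f) :
    ∀ {x b : V}, (Dd G u e).Walk x b → (Dd G u e).Reachable a x →
      (Dd G μ f).Reachable x b := by
  intro x b w
  induction w with
  | nil => exact fun _ => Reachable.refl _
  | @cons x c b h p ih =>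
    intro hax
    have hc : (Dd G u e).Reachable a c := hax.trans h.reachable
    have hadj : (Dd G μ f).Adj x c :=
      Dd_adj.mpr ⟨⟨Dd_le h, hz x hax, hz c hc⟩, hf x c h⟩
    exact hadj.reachable.trans (ih hc)

lemma witness [Fintype V] {G : SimpleGraph V} (hmin : G.MinimallyTwoConnected)
    {p q : V} (hadj : G.Adj p q) :
    ∃ u, u ≠ p ∧ u ≠ q ∧ ¬ (Dd G u s(p, q)).Reachable p q := by
  have he : s(p, q) ∈ G.edgeSet := hadj
  have hnt := hmin.2 _ he
  rw [SimpleGraph.TwoConnected] at hnt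
  push_neg at hnt
  have hcard : 3 ≤ Fintype.card V := hmin.1.1
  obtain ⟨v, hv⟩ := hnt hcard
  -- v is distinct from p and q
  have hvp : v ≠ p := by
    rintro rfl
    apply hv
    have hconn := hmin.1.2 v
    let f : G.induce {u | u ≠ v} →g (G.deleteEdges {s(v, q)}).induce {u | u ≠ v} :=
      { toFun := fun x => ⟨x.1, x.2⟩
        map_rel' := by
          intro x y hxy
          show (G.deleteEdges {s(v, q)}).Adj x.1 y.1
          rw [deleteEdges_adj, Set.mem_singleton_iff]
          refine ⟨hxy, ?_⟩
          intro hh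
          rcases Sym2.eq_iff.mp hh with ⟨h1, -⟩ | ⟨-, h2⟩
          · exact x.2 h1
          · exact y.2 h2 }
    exact hconn.map f (fun x => ⟨⟨x.1, x.2⟩, Subtype.ext rfl⟩)
  have hvq : v ≠ q := by
    rintro rfl
    apply hv
    have hconn := hmin.1.2 v
    let f : G.induce {u | u ≠ v} →g (G.deleteEdges {s(p, v)}).induce {u | u ≠ v} :=
      { toFun := fun x => ⟨x.1, x.2⟩
        map_rel' := by
          intro x y hxy
          show (G.deleteEdges {s(p, v)}).Adj x.1 y.1
          rw [deleteEdges_adj, Set.mem_singleton_iff]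
          refine ⟨hxy, ?_⟩
          intro hh
          rcases Sym2.eq_iff.mp hh with ⟨-, h2⟩ | ⟨h1, -⟩
          · exact y.2 h2
          · exact x.2 h1 }
    exact hconn.map f (fun x => ⟨⟨x.1, x.2⟩, Subtype.ext rfl⟩)
  -- extract a non-reachable pair
  rw [SimpleGraph.connected_iff] at hv
  push_neg at hv
  have hne : Nonempty {x | x ≠ v} := by
    obtain ⟨b, hb⟩ := Fintype.exists_ne_of_one_lt_card (by omega) v
    exact ⟨⟨b, hb⟩⟩
  obtain ⟨⟨a, ha⟩, ⟨b, hb⟩, hnr⟩ : ∃ x y, ¬ ((G.deleteEdges {s(p,q)}).induce {x | x ≠ v}).Reachable x y := by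
    by_contra hcon
    push_neg at hcon
    exact (not_isEmpty_iff.mpr hne) (hv (fun x y => hcon x y))
  refine ⟨v, hvp, hvq, ?_⟩
  intro hr
  apply hnr
  obtain ⟨wab⟩ := reach_Dv_of_twoConnected hmin.1 ha hb
  obtain ⟨wd⟩ := patch rfl hr wab
  exact reach_induce_of_Dd wd ha hb


lemma lemA [Fintype V] {G : SimpleGraph V} [DecidableRel G.Adj]
    (hmin : G.MinimallyTwoConnected)
    {v₀ : V} (C : G.Walk v₀ v₀) (hC : C.IsCycle)
    (hdeg : ∀ x ∈ C.support, 3 ≤ G.degree x) : False := by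
  classical
  -- the family of fragments arising from edges of C
  let Pred : ℕ → Prop := fun n => ∃ p q u, G.Adj p q ∧ s(p, q) ∈ C.edges ∧
      u ≠ p ∧ u ≠ q ∧ ¬ (Dd G u s(p, q)).Reachable p q ∧
      n = {z | (Dd G u s(p, q)).Reachable p z}.ncard
  have hBadNe : ∃ n, Pred n := by
    obtain ⟨x, y, hx, hy, R, hdec⟩ := cyc_decomp C hC
    have he : s(v₀, x) ∈ C.edges := by
      rw [hdec, edges_cons]
      exact List.mem_cons_self
    obtain ⟨u, hup, huq, hdis⟩ := witness hmin hx
    exact ⟨_, v₀, x, u, hx, he, hup, huq, hdis, rfl⟩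
  obtain ⟨n₀, hn₀S, hn₀min⟩ : ∃ n, Pred n ∧ ∀ m, Pred m → n ≤ m :=
    ⟨sInf {n | Pred n}, Nat.sInf_mem hBadNe, fun m hm => Nat.sInf_le hm⟩
  obtain ⟨p, q, u, hadj, heC, hup, huq, hpq, hn₀⟩ := hn₀S
  have hmin' : ∀ a b w, G.Adj a b → s(a, b) ∈ C.edges → w ≠ a → w ≠ b →
      ¬ (Dd G w s(a, b)).Reachable a b →
      n₀ ≤ {z | (Dd G w s(a, b)).Reachable a z}.ncard :=
    fun a b w h1 h2 h3 h4 h5 => hn₀min _ ⟨a, b, w, h1, h2, h3, h4, h5, rfl⟩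
  have hεdef : True := trivial
  have hpC : p ∈ C.support := C.fst_mem_support_of_mem_edges heC
  have hqC : q ∈ C.support := C.snd_mem_support_of_mem_edges heC
  have hPu : ¬ (Dd G u s(p, q)).Reachable p u := fun h => hup (Dd_reach_ne h).symm
  -- u lies on C
  have huC : u ∈ C.support := by
    by_contra huC
    exact hpq (cycle_reach C hC heC huC)
  -- decompose the cycle rotated at u
  have hC₂ : (C.rotate u huC).IsCycle := hC.rotate huC
  obtain ⟨x, y, hx, hy, R, hdec⟩ := cyc_decomp (C.rotate u huC) hC₂
  have hsup : (C.rotate u huC).support = u :: (R.support ++ [u]) := by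
    rw [hdec, support_cons, support_concat]
  have hedg : (C.rotate u huC).edges = s(u, x) :: (R.edges ++ [s(y, u)]) := by
    rw [hdec, edges_cons, edges_concat, List.concat_eq_append]
  have hnd : (R.support ++ [u]).Nodup := by
    have h2 := hC₂.support_nodup
    rw [hsup, List.tail_cons] at h2
    exact h2
  have huR : u ∉ R.support := by
    intro hmem
    exact (List.nodup_append'.mp hnd).2.2 hmem (List.mem_singleton_self u)
  have hRtrail : R.IsTrail := by
    have h2 := hC₂.isCircuit.isTrail.edges_nodup
    rw [hedg] at h2
    exact ⟨((List.nodup_cons.mp h2).2.sublist (List.sublist_append_left _ _) : _)⟩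
  have heux : s(u, x) ∈ C.edges := by
    refine (List.IsRotated.mem_iff (rotate_edges C u huC)).mp ?_
    rw [hedg]
    exact List.mem_cons_self
  have heuy : s(y, u) ∈ C.edges := by
    refine (List.IsRotated.mem_iff (rotate_edges C u huC)).mp ?_
    rw [hedg]
    exact List.mem_cons_of_mem _ (List.mem_append_right _ (List.mem_singleton_self _))
  have hmemR : ∀ z, z ∈ C.support → z ≠ u → z ∈ R.support := by
    intro z hz hzu
    have hmem : z ∈ (C.rotate u huC).support := (support_rotate_mem C hC huC).mpr hz
    rw [hsup] at hmem
    rcases List.mem_cons.mp hmem with rfl | h2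
    · exact absurd rfl hzu
    rcases List.mem_append.mp h2 with h3 | h4
    · exact h3
    · exact absurd (List.mem_singleton.mp h4) hzu
  have hsplit : ∀ z, z ∈ R.support →
      (Dd G u s(p, q)).Reachable z x ∨ (Dd G u s(p, q)).Reachable z y :=
    fun z hz => split s(p, q) R hRtrail huR hz
  have hpR := hmemR p hpC (fun h => hup h.symm)
  have hqR := hmemR q hqC (fun h => huq h.symm)
  obtain ⟨α, β, hadjuα, hadjuβ, heα, heβ, hpα, hqβ, hreachsplit⟩ :
      ∃ α β, G.Adj u α ∧ G.Adj u β ∧ s(u, α) ∈ C.edges ∧ s(u, β) ∈ C.edges ∧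
        (Dd G u s(p, q)).Reachable p α ∧ (Dd G u s(p, q)).Reachable q β ∧
        (∀ z, z ∈ R.support →
          (Dd G u s(p, q)).Reachable z α ∨ (Dd G u s(p, q)).Reachable z β) := by
    have heuy' : s(u, y) ∈ C.edges := by rwa [Sym2.eq_swap]
    rcases hsplit p hpR with h1 | h1 <;> rcases hsplit q hqR with h2 | h2
    · exact absurd (h1.trans h2.symm) hpq
    · exact ⟨x, y, hx, hy.symm, heux, heuy', h1, h2, hsplit⟩
    · exact ⟨y, x, hy.symm, hx, heuy', heux, h1, h2, fun z hz => (hsplit z hz).symm⟩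
    · exact absurd (h1.trans h2.symm) hpq
  have hαβ : α ≠ β := by
    rintro rfl
    exact hpq (hpα.trans hqβ.symm)
  have hφdef : True := trivial
  have heαu : s(α, u) ∈ C.edges := by rwa [Sym2.eq_swap]
  -- witness for the edge φ
  obtain ⟨μ, hμα, hμu, hbr⟩ := witness hmin (hadjuα.symm : G.Adj α u)
  have hbr' : ¬ (Dd G μ s(α, u)).Reachable u α := fun h => hbr h.symm
  have hμC : μ ∈ C.support := by
    by_contra hμC
    exact hbr (cycle_reach C hC heαu hμC)
  -- edges of (Dd G u s(p, q)) never touch u, hence differ from φ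
  have hfφ : ∀ w c, (Dd G u s(p, q)).Adj w c → s(w, c) ≠ s(α, u) := by
    intro w c had heq
    have h' := (Dd_adj.mp had).1
    rcases Sym2.eq_iff.mp heq with ⟨-, h2⟩ | ⟨h1, -⟩
    · exact h'.2.2 h2
    · exact h'.2.1 h1
  rcases hreachsplit μ (hmemR μ hμC hμu) with hμP' | hμQ'
  · -- CASE μ ∈ P
    have hμP : (Dd G u s(p, q)).Reachable p μ := hpα.trans hμP'.symm
    have key : ∀ w z, (Dd G μ s(α, u)).Walk w z → (Dd G μ s(α, u)).Reachable α w →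
        (Dd G u s(p, q)).Reachable p w → (Dd G u s(p, q)).Reachable p z := by
      intro w z W
      induction W with
      | nil => exact fun _ h => h
      | @cons w c z h p' ih =>
        intro hαw hpw
        have hstep : (Dd G u s(p, q)).Reachable p c := by
          by_cases hwc : (Dd G u s(p, q)).Adj w c
          · exact hpw.trans hwc.reachable
          · have h' := Dd_adj.mp h
            rw [Dd_adj] at hwc
            push_neg at hwc
            by_cases hwu : w = u
            · exact absurd (hwu ▸ hpw) hPu
            by_cases hcu : c = u
            · exact absurd (hαw.trans (hcu ▸ h.reachable)) hbr
            have hse : s(w, c) = s(p, q) := hwc ⟨h'.1.1, hwu, hcu⟩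
            rcases Sym2.eq_iff.mp hse with ⟨h1, h2⟩ | ⟨h1, h2⟩
            · -- w = p, c = q : leads to a contradiction
              have hqβ' : (Dd G μ s(α, u)).Reachable q β := by
                obtain ⟨wqβ⟩ := hqβ
                refine reach_transfer ?_ hfφ wqβ (Reachable.refl q)
                · rintro z hzq rfl
                  exact hpq (hμP.trans hzq.symm)
              have hβu : (Dd G μ s(α, u)).Adj β u := by
                refine Dd_adj.mpr ⟨⟨hadjuβ.symm, ?_, hμu.symm⟩, ?_⟩
                · rintro rfl
                  exact hpq (hμP.trans hqβ.symm)
                · intro heq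
                  rcases Sym2.eq_iff.mp heq with ⟨h3, -⟩ | ⟨h3, -⟩
                  · exact hαβ h3.symm
                  · exact hadjuβ.ne' h3
              have hq2 : (Dd G μ s(α, u)).Reachable α q := by
                rw [← h2]
                exact hαw.trans h.reachable
              exact absurd (hq2.trans (hqβ'.trans hβu.reachable)) hbr
            · rw [h1] at hpw
              exact absurd hpw hpq
        exact ih (hαw.trans h.reachable) hstep
    have hsub : {z | (Dd G μ s(α, u)).Reachable α z} ⊂ {z | (Dd G u s(p, q)).Reachable p z} := by
      constructor
      · intro z hz
        obtain ⟨W⟩ := hz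
        exact key α z W (Reachable.refl α) hpα
      · intro hcon
        have h2 : (Dd G μ s(α, u)).Reachable α μ := hcon hμP
        exact hμα (Dd_reach_ne h2).symm
    have hlt : {z | (Dd G μ s(α, u)).Reachable α z}.ncard <
        {z | (Dd G u s(p, q)).Reachable p z}.ncard :=
      Set.ncard_lt_ncard hsub (Set.toFinite _)
    have hge := hmin' α u μ hadjuα.symm heαu hμα hμu hbr
    rw [hn₀] at hge
    exact absurd hlt (not_lt.mpr hge)
  · -- CASE μ ∈ Q
    have hμQ : (Dd G u s(p, q)).Reachable q μ := hqβ.trans hμQ'.symm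
    have factN : ∀ c, G.Adj u c → (Dd G u s(p, q)).Reachable p c → c = α := by
      intro c hc hpc
      by_contra hcα
      have hαc : (Dd G μ s(α, u)).Reachable α c := by
        obtain ⟨w⟩ := hpα.symm.trans hpc
        refine reach_transfer ?_ hfφ w (Reachable.refl α)
        · rintro z hz rfl
          exact hpq ((hpα.trans hz).trans hμQ.symm)
      have hcu2 : (Dd G μ s(α, u)).Adj c u := by
        refine Dd_adj.mpr ⟨⟨hc.symm, ?_, hμu.symm⟩, ?_⟩
        · rintro rfl
          exact hpq (hpc.trans hμQ.symm)
        · intro heq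
          rcases Sym2.eq_iff.mp heq with ⟨h1, -⟩ | ⟨h1, -⟩
          · exact hcα h1
          · exact hc.ne' h1
      exact hbr' (hαc.trans hcu2.reachable).symm
    by_cases hpeq : p = α
    · -- subcase p = α : p has a third neighbour, G - p is disconnected
      have hdp := hdeg p hpC
      have hnsub : ¬ (G.neighborFinset p ⊆ {q, u}) := by
        intro hsubn
        have hcard := Finset.card_le_card hsubn
        have h2 : ({q, u} : Finset V).card ≤ 2 :=
          (Finset.card_insert_le _ _).trans (by simp)
        have h3 : G.degree p ≤ 2 := le_trans hcard h2
        omega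
      obtain ⟨r, hrmem, hrnot⟩ := Finset.not_subset.mp hnsub
      rw [SimpleGraph.mem_neighborFinset] at hrmem
      simp only [Finset.mem_insert, Finset.mem_singleton, not_or] at hrnot
      obtain ⟨hrq, hru⟩ := hrnot
      have hpr : (Dd G u s(p, q)).Reachable p r := by
        refine (Dd_adj.mpr ⟨⟨hrmem, fun h => hup h.symm, hru⟩, ?_⟩).reachable
        intro heq
        rcases Sym2.eq_iff.mp heq with ⟨-, h2⟩ | ⟨h1, -⟩
        · exact hrq h2
        · exact hadj.ne h1
      have key2 : ∀ w z, (Dv G p).Walk w z → (Dd G u s(p, q)).Reachable p w →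
          (Dd G u s(p, q)).Reachable p z := by
        intro w z W
        induction W with
        | nil => exact fun h => h
        | @cons w c z h p' ih =>
          intro hpw
          have hstep : (Dd G u s(p, q)).Reachable p c := by
            by_cases hwc : (Dd G u s(p, q)).Adj w c
            · exact hpw.trans hwc.reachable
            · rw [Dd_adj] at hwc
              push_neg at hwc
              by_cases hwu : w = u
              · exact absurd (hwu ▸ hpw) hPu
              by_cases hcu : c = u
              · have hwα : w = α := factN w (hcu ▸ h.1.symm) hpw
                exact absurd (hwα.trans hpeq.symm) h.2.1
              have hse : s(w, c) = s(p, q) := hwc ⟨h.1, hwu, hcu⟩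
              rcases Sym2.eq_iff.mp hse with ⟨rfl, rfl⟩ | ⟨rfl, rfl⟩
              · exact absurd rfl h.2.1
              · exact absurd rfl h.2.2
          exact ih hstep
      obtain ⟨W⟩ := reach_Dv_of_twoConnected hmin.1 hrmem.ne' hup
      exact hPu (key2 r u W hpr)
    · -- subcase p ≠ α : smaller fragment with witness p
      have key3 : ∀ w z, (Dd G p s(α, u)).Walk w z → (Dd G u s(p, q)).Reachable p w →
          (Dd G u s(p, q)).Reachable p z := by
        intro w z W
        induction W with
        | nil => exact fun h => h
        | @cons w c z h p' ih =>
          intro hpw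
          have h' := Dd_adj.mp h
          have hstep : (Dd G u s(p, q)).Reachable p c := by
            by_cases hwc : (Dd G u s(p, q)).Adj w c
            · exact hpw.trans hwc.reachable
            · rw [Dd_adj] at hwc
              push_neg at hwc
              by_cases hwu : w = u
              · exact absurd (hwu ▸ hpw) hPu
              by_cases hcu : c = u
              · have hwα : w = α := factN w (hcu ▸ h'.1.1.symm) hpw
                refine absurd ?_ h'.2
                rw [hwα, hcu]
              have hse : s(w, c) = s(p, q) := hwc ⟨h'.1.1, hwu, hcu⟩
              rcases Sym2.eq_iff.mp hse with ⟨rfl, rfl⟩ | ⟨rfl, rfl⟩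
              · exact absurd rfl h'.1.2.1
              · exact absurd rfl h'.1.2.2
          exact ih hstep
      have hnr3 : ¬ (Dd G p s(α, u)).Reachable α u := by
        intro hr
        obtain ⟨W⟩ := hr
        exact hPu (key3 α u W hpα)
      have hsub : {z | (Dd G p s(α, u)).Reachable α z} ⊂
          {z | (Dd G u s(p, q)).Reachable p z} := by
        constructor
        · intro z hz
          obtain ⟨W⟩ := hz
          exact key3 α z W hpα
        · intro hcon
          have h2 : (Dd G p s(α, u)).Reachable α p := hcon (Reachable.refl p)
          exact hpeq (Dd_reach_ne h2).symm
      have hlt : {z | (Dd G p s(α, u)).Reachable α z}.ncard <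
          {z | (Dd G u s(p, q)).Reachable p z}.ncard :=
        Set.ncard_lt_ncard hsub (Set.toFinite _)
      have hge := hmin' α u p hadjuα.symm heαu hpeq (fun h => hup h.symm) hnr3
      rw [hn₀] at hge
      exact absurd hlt (not_lt.mpr hge)

end TwoConnAux

open TwoConnAux in
theorem minimally_two_connected_structure {V : Type*} [Fintype V]
    (G : SimpleGraph V) [DecidableRel G.Adj]
    (hmin : G.MinimallyTwoConnected) :
    G.minDegree = 2 ∧ (G.induce {v : V | 3 ≤ G.degree v}).IsAcyclic := by
  classical
  have hcard : 3 ≤ Fintype.card V := hmin.1.1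
  have hNonempty : Nonempty V := Fintype.card_pos_iff.mp (by omega)
  -- every vertex has degree at least 2
  have hge2 : ∀ v, 2 ≤ G.degree v := by
    intro v
    by_contra hlt
    push_neg at hlt
    have hcard1 : (G.neighborFinset v).card ≤ 1 := Nat.lt_succ_iff.mp hlt
    obtain ⟨w₀, hw₀v, hw₀⟩ : ∃ w₀, w₀ ≠ v ∧ ∀ c, G.Adj v c → c = w₀ := by
      rcases Finset.eq_empty_or_nonempty (G.neighborFinset v) with hemp | ⟨w, hw⟩
      · obtain ⟨w₀, hne⟩ := Fintype.exists_ne_of_one_lt_card (by omega) v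
        refine ⟨w₀, hne, fun c hc => ?_⟩
        have : c ∈ G.neighborFinset v := (SimpleGraph.mem_neighborFinset _ _ _).mpr hc
        rw [hemp] at this
        exact absurd this (Finset.notMem_empty c)
      · refine ⟨w, ((SimpleGraph.mem_neighborFinset _ _ _).mp hw).ne', fun c hc => ?_⟩
        exact Finset.card_le_one.mp hcard1 c
          ((SimpleGraph.mem_neighborFinset _ _ _).mpr hc) w hw
    obtain ⟨z, hzv, hzw⟩ : ∃ z, z ≠ v ∧ z ≠ w₀ := by
      have h2 : ({v, w₀} : Finset V).card ≤ 2 :=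
        (Finset.card_insert_le _ _).trans (by simp)
      have hne : (({v, w₀} : Finset V)ᶜ).Nonempty := by
        rw [← Finset.card_pos, Finset.card_compl]
        omega
      obtain ⟨z, hz⟩ := hne
      rw [Finset.mem_compl, Finset.mem_insert, Finset.mem_singleton] at hz
      push_neg at hz
      exact ⟨z, hz.1, hz.2⟩
    obtain ⟨W⟩ := reach_Dv_of_twoConnected hmin.1 (Ne.symm hw₀v) hzw (a := v) (b := z)
    cases W with
    | nil => exact hzv rfl
    | cons h p => exact h.2.2 (hw₀ _ h.1)
  have hminDegGe : 2 ≤ G.minDegree := G.le_minDegree_of_forall_le_degree 2 hge2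
  -- G is connected
  have hconn : G.Connected := by
    rw [SimpleGraph.connected_iff]
    refine ⟨fun a b => ?_, hNonempty⟩
    by_cases hab : a = b
    · rw [hab]
    · obtain ⟨c, hca, hcb⟩ : ∃ c, c ≠ a ∧ c ≠ b := by
        have h2 : ({a, b} : Finset V).card ≤ 2 :=
          (Finset.card_insert_le _ _).trans (by simp)
        have hne : (({a, b} : Finset V)ᶜ).Nonempty := by
          rw [← Finset.card_pos, Finset.card_compl]
          omega
        obtain ⟨z, hz⟩ := hne
        rw [Finset.mem_compl, Finset.mem_insert, Finset.mem_singleton] at hz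
        push_neg at hz
        exact ⟨z, hz.1, hz.2⟩
      have hr := reach_Dv_of_twoConnected hmin.1 (Ne.symm hca) (Ne.symm hcb)
      have hle : Dv G c ≤ G := fun _ _ h => h.1
      exact hr.mono hle
  -- the 3⁺ vertices induce a forest
  have hforest : (G.induce {v : V | 3 ≤ G.degree v}).IsAcyclic := by
    intro w c hc
    refine lemA hmin
      (c.map (SimpleGraph.Embedding.induce (G := G) {v : V | 3 ≤ G.degree v}).toHom)
      ((SimpleGraph.Walk.map_isCycle_iff_of_injective
        (SimpleGraph.Embedding.induce (G := G) {v : V | 3 ≤ G.degree v}).injective).mpr hc) ?_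
    intro x hx
    rw [SimpleGraph.Walk.support_map] at hx
    obtain ⟨a, ha, rfl⟩ := List.mem_map.mp hx
    exact a.2
  refine ⟨le_antisymm ?_ hminDegGe, hforest⟩
  by_contra hgt
  push_neg at hgt
  have hdeg3 : ∀ v, 3 ≤ G.degree v := fun v =>
    lt_of_lt_of_le hgt (G.minDegree_le_degree v)
  have hnotacyclic : ¬ G.IsAcyclic := by
    intro hacyc
    have htree : G.IsTree := ⟨hconn, hacyc⟩
    have hE := htree.card_edgeFinset
    have hsum := G.sum_degrees_eq_twice_card_edges
    have hsum2 : 3 * Fintype.card V ≤ ∑ v, G.degree v := by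
      have := Finset.sum_le_sum (fun i (_ : i ∈ Finset.univ) => hdeg3 i)
      rw [Finset.sum_const, smul_eq_mul] at this
      calc 3 * Fintype.card V = Finset.univ.card * 3 := by
            rw [Finset.card_univ]; ring
        _ ≤ ∑ v, G.degree v := this
    omega
  have hcyc : ∃ (v : V) (c : G.Walk v v), c.IsCycle := by
    by_contra hno
    push_neg at hno
    exact hnotacyclic (by intro v c hc; exact hno v c hc)
  obtain ⟨v, c, hc⟩ := hcyc
  exact lemA hmin c hc (fun x _ => hdeg3 x)
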